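/- Let G be a connected simple graph with m edges, m ≥ 3. If every interior vertex of G is a support vertex, then G is universal antimagic. -/

import Mathlib

open scoped Classical

noncomputable def edgeFS {V : Type*} [Fintype V] (G : SimpleGraph V) : Finset (Sym2 V) :=
  G.edgeSet.toFinset

noncomputable def vSum {V : Type*} [Fintype V] (G : SimpleGraph V) (φ : Sym2 V → ℝ) (v : V) : ℝ :=
  ∑ e ∈ (edgeFS G).filter (fun e => v ∈ e), φ e

noncomputable def vProd {V : Type*} [Fintype V] (G : SimpleGraph V) (φ : Sym2 V → ℝ) (v : V) : ℝ :=
  ∏ e ∈ (edgeFS G).filter (fun e => v ∈ e), φ e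

/-- `G` has an antimagic `L`-labeling for every set `L` of `(edgeFS G).card` positive reals. -/
def UnivAntimagic {V : Type*} [Fintype V] (G : SimpleGraph V) : Prop :=
  ∀ L : Finset ℝ, (∀ x ∈ L, 0 < x) → L.card = (edgeFS G).card →
    ∃ φ : Sym2 V → ℝ, Set.BijOn φ ↑(edgeFS G) ↑L ∧ Function.Injective (vSum G φ)

section AuxStmt11

lemma reach_mem' {V : Type*} (G : SimpleGraph V) (S : Set V)
    (hS : ∀ x ∈ S, ∀ y, G.Adj x y → y ∈ S) {a b : V}
    (h : G.Reachable a b) (ha : a ∈ S) : b ∈ S := by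
  obtain ⟨w⟩ := h
  induction w with
  | nil => exact ha
  | cons h' p ih => exact ih (hS _ ha _ h')

lemma mem_edgeFS' {V : Type*} [Fintype V] (G : SimpleGraph V) (e : Sym2 V) :
    e ∈ edgeFS G ↔ e ∈ G.edgeSet := Set.mem_toFinset

lemma inc_eq' {V : Type*} [Fintype V] (G : SimpleGraph V) (v : V) :
    (edgeFS G).filter (fun e => v ∈ e) = G.incidenceFinset v := by
  ext e
  simp only [SimpleGraph.mem_incidenceFinset, SimpleGraph.incidenceSet, Finset.mem_filter,
    mem_edgeFS', Set.mem_setOf_eq, SimpleGraph.mem_edgeSet]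

lemma inc_card' {V : Type*} [Fintype V] (G : SimpleGraph V) (v : V) :
    ((edgeFS G).filter (fun e => v ∈ e)).card = G.degree v := by
  rw [inc_eq']; exact G.card_incidenceFinset_eq_degree v

lemma deg_pos' {V : Type*} [Fintype V] (G : SimpleGraph V) (hconn : G.Connected)
    (hm : 1 ≤ (edgeFS G).card) : ∀ v : V, 1 ≤ G.degree v := by
  intro v
  obtain ⟨e, he⟩ := Finset.card_pos.mp hm
  rw [mem_edgeFS'] at he
  induction e using Sym2.ind with
  | _ a b =>
    rw [SimpleGraph.mem_edgeSet] at he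
    by_contra h
    have hdeg : G.degree v = 0 := by omega
    have hno : ∀ y, ¬ G.Adj v y := by
      intro y hy
      have hmem : y ∈ G.neighborFinset v := by simpa using hy
      have hnf : G.neighborFinset v = ∅ :=
        Finset.card_eq_zero.mp (by rw [G.card_neighborFinset_eq_degree]; exact hdeg)
      rw [hnf] at hmem
      simp at hmem
    have hav : a ∈ ({v} : Set V) :=
      reach_mem' G {v} (by rintro x rfl y hy; exact absurd hy (hno y)) (hconn.preconnected v a) rfl
    have hbv : b ∈ ({v} : Set V) :=
      reach_mem' G {v} (by rintro x rfl y hy; exact absurd hy (hno y)) (hconn.preconnected v b) rfl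
    simp only [Set.mem_singleton_iff] at hav hbv
    rw [hav, hbv] at he
    exact G.loopless.irrefl v he

lemma nbr_singleton' {V : Type*} [Fintype V] (G : SimpleGraph V) {a b : V}
    (hadj : G.Adj a b) (hdeg : G.degree a ≤ 1) : ∀ y, G.Adj a y → y = b := by
  intro y hy
  have hb : b ∈ G.neighborFinset a := by simpa using hadj
  have hy' : y ∈ G.neighborFinset a := by simpa using hy
  have := Finset.card_le_one.mp (by rw [G.card_neighborFinset_eq_degree]; exact hdeg)
  exact this y hy' b hb

lemma interior_endpoint' {V : Type*} [Fintype V] (G : SimpleGraph V) (hconn : G.Connected)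
    (hm : 3 ≤ (edgeFS G).card) : ∀ e ∈ edgeFS G, ∃ v, v ∈ e ∧ 2 ≤ G.degree v := by
  intro e he
  rw [mem_edgeFS'] at he
  induction e using Sym2.ind with
  | _ a b =>
    rw [SimpleGraph.mem_edgeSet] at he
    by_contra h
    push_neg at h
    have hda : G.degree a ≤ 1 := by
      have := h a (Sym2.mem_mk_left a b); omega
    have hdb : G.degree b ≤ 1 := by
      have := h b (Sym2.mem_mk_right a b); omega
    have hna := nbr_singleton' G he hda
    have hnb := nbr_singleton' G he.symm hdb
    have hS : ∀ x ∈ ({a, b} : Set V), ∀ y, G.Adj x y → y ∈ ({a, b} : Set V) := by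
      rintro x (rfl | rfl) y hy
      · right; exact hna y hy
      · left; exact hnb y hy
    have hall : ∀ v : V, v ∈ ({a, b} : Set V) := fun v =>
      reach_mem' G _ hS (hconn.preconnected a v) (by left; rfl)
    have hsub : edgeFS G ⊆ {s(a, b)} := by
      intro e' he'
      rw [mem_edgeFS'] at he'
      induction e' using Sym2.ind with
      | _ x y =>
        rw [SimpleGraph.mem_edgeSet] at he'
        have hx := hall x
        have hy := hall y
        have hne := he'.ne
        simp only [Set.mem_insert_iff, Set.mem_singleton_iff] at hx hy
        simp only [Finset.mem_singleton, Sym2.eq_iff]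
        rcases hx with rfl | rfl <;> rcases hy with rfl | rfl <;> tauto
    have := Finset.card_le_card hsub
    simp at this
    omega

lemma star_all_inc' {V : Type*} [Fintype V] (G : SimpleGraph V) (hconn : G.Connected)
    {v : V} (hv : 2 ≤ G.degree v) (hleaf : ∀ y, G.Adj v y → G.degree y = 1) :
    ∀ e ∈ edgeFS G, v ∈ e := by
  intro e he
  rw [mem_edgeFS'] at he
  induction e using Sym2.ind with
  | _ a b =>
    rw [SimpleGraph.mem_edgeSet] at he
    have hS : ∀ x ∈ ({v} : Set V) ∪ {y | G.Adj v y}, ∀ z, G.Adj x z →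
        z ∈ ({v} : Set V) ∪ {y | G.Adj v y} := by
      rintro x (rfl | hx) z hz
      · right; exact hz
      · have : z = v := nbr_singleton' G hx.symm (hleaf x hx).le z hz
        left; exact this
    have hall : ∀ u : V, u ∈ ({v} : Set V) ∪ {y | G.Adj v y} := fun u =>
      reach_mem' G _ hS (hconn.preconnected v u) (by left; rfl)
    by_contra hve
    have hav : a ≠ v := fun h => hve (h ▸ Sym2.mem_mk_left a b)
    have hbv : b ≠ v := fun h => hve (h ▸ Sym2.mem_mk_right a b)
    have ha' : G.Adj v a := by
      rcases hall a with h | h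
      · exact absurd (Set.mem_singleton_iff.mp h) hav
      · exact h
    have : b = v := nbr_singleton' G ha'.symm (hleaf a ha').le b he
    exact hbv this

lemma exists_bijOn' {α β : Type*} [Nonempty β] (s : Finset α) (t : Finset β)
    (h : s.card = t.card) : ∃ f : α → β, Set.BijOn f ↑s ↑t := by
  classical
  let e := Finset.equivOfCardEq h
  refine ⟨fun a => if ha : a ∈ s then (e ⟨a, ha⟩ : β) else Classical.arbitrary β, ?_, ?_, ?_⟩
  · intro a ha
    simp only [Finset.mem_coe] at ha
    simp only [ha, dif_pos]
    exact (e ⟨a, ha⟩).2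
  · intro a ha b hb hab
    simp only [Finset.mem_coe] at ha hb
    simp only [ha, hb, dif_pos] at hab
    have := e.injective (Subtype.ext hab)
    exact congrArg Subtype.val this
  · intro y hy
    simp only [Finset.mem_coe] at hy
    refine ⟨(e.symm ⟨y, hy⟩ : α), (e.symm ⟨y, hy⟩).2, ?_⟩
    simp only [Finset.coe_mem, dif_pos]
    rw [Subtype.coe_eta]
    simp

lemma bijOn_union_of_disjoint' {α β : Type*} {f : α → β} {s₁ s₂ : Set α} {t₁ t₂ : Set β}
    (h1 : Set.BijOn f s₁ t₁) (h2 : Set.BijOn f s₂ t₂) (hd : Disjoint t₁ t₂) :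
    Set.BijOn f (s₁ ∪ s₂) (t₁ ∪ t₂) := by
  refine Set.BijOn.union h1 h2 ?_
  intro a ha b hb hab
  rcases ha with ha | ha
  · rcases hb with hb | hb
    · exact h1.injOn ha hb hab
    · exact ((Set.disjoint_left.mp hd (h1.mapsTo ha) (hab ▸ h2.mapsTo hb))).elim
  · rcases hb with hb | hb
    · exact ((Set.disjoint_left.mp hd (show f a ∈ t₁ from hab.symm ▸ h1.mapsTo hb) (h2.mapsTo ha))).elim
    · exact h2.injOn ha hb hab

lemma exists_bottom' (L : Finset ℝ) : ∀ p : ℕ, p ≤ L.card →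
    ∃ s ⊆ L, s.card = p ∧ ∀ x ∈ s, ∀ y ∈ L, y ∉ s → x < y := by
  intro p
  induction p with
  | zero => exact fun _ => ⟨∅, Finset.empty_subset _, rfl, by simp⟩
  | succ q ih =>
    intro hq
    obtain ⟨s, hsL, hsc, hsb⟩ := ih (Nat.le_of_succ_le hq)
    have hne : (L \ s).Nonempty := by
      rw [← Finset.card_pos, Finset.card_sdiff_of_subset hsL]
      omega
    set c := (L \ s).min' hne with hc
    have hcmem : c ∈ L \ s := Finset.min'_mem _ _
    refine ⟨insert c s, ?_, ?_, ?_⟩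
    · exact Finset.insert_subset (Finset.mem_sdiff.mp hcmem).1 hsL
    · rw [Finset.card_insert_of_notMem (Finset.mem_sdiff.mp hcmem).2, hsc]
    · intro x hx y hy hyns
      have hyns' : y ∉ s := fun h => hyns (Finset.mem_insert_of_mem h)
      rcases Finset.mem_insert.mp hx with rfl | hx
      · have : y ∈ L \ s := Finset.mem_sdiff.mpr ⟨hy, hyns'⟩
        have := Finset.min'_le _ _ this
        rcases lt_or_eq_of_le this with h | h
        · exact h
        · exact absurd (h ▸ Finset.mem_insert_self _ s) hyns
      · exact hsb x hx y hy hyns'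

lemma matching_lemma' {α : Type*} : ∀ (n : ℕ) (I : Finset α) (t : α → ℝ) (C : Finset ℝ),
    I.card = n → C.card = n →
    ∃ g : α → ℝ, Set.BijOn g ↑I ↑C ∧ Set.InjOn (fun i => t i + g i) ↑I := by
  intro n
  induction n with
  | zero =>
    intro I t C hI hC
    rw [Finset.card_eq_zero] at hI hC
    subst hI; subst hC
    exact ⟨fun _ => 0, by simp [Set.BijOn], by simp [Set.InjOn]⟩
  | succ n ih =>
    intro I t C hI hC
    have hIne : I.Nonempty := Finset.card_pos.mp (by omega)
    obtain ⟨i₀, hi₀, hmax⟩ := I.exists_max_image t hIne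
    have hCne : C.Nonempty := Finset.card_pos.mp (by omega)
    set c₀ := C.max' hCne with hc₀
    obtain ⟨g, hg, hginj⟩ := ih (I.erase i₀) t (C.erase c₀)
      (by rw [Finset.card_erase_of_mem hi₀, hI]; omega)
      (by rw [Finset.card_erase_of_mem (C.max'_mem hCne), hC]; omega)
    refine ⟨Function.update g i₀ c₀, ⟨?_, ?_, ?_⟩, ?_⟩
    · intro a ha
      rcases eq_or_ne a i₀ with rfl | hne
      · simp [Function.update_self]
        exact C.max'_mem hCne
      · rw [Function.update_of_ne hne]
        exact Finset.erase_subset _ _ (hg.mapsTo (by simp [Finset.mem_coe, Finset.mem_erase, hne, Finset.mem_coe.mp ha] ))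
    · intro a ha b hb hab
      simp only [Finset.mem_coe] at ha hb
      by_cases hna : a = i₀
      · subst hna
        by_cases hnb : b = a
        · exact hnb.symm
        · rw [Function.update_self, Function.update_of_ne hnb] at hab
          have : g b ∈ C.erase c₀ := hg.mapsTo (by simp [Finset.mem_erase, hnb, hb])
          exact absurd hab.symm (Finset.ne_of_mem_erase this)
      · by_cases hnb : b = i₀
        · subst hnb
          rw [Function.update_self, Function.update_of_ne hna] at hab
          have : g a ∈ C.erase c₀ := hg.mapsTo (by simp [Finset.mem_erase, hna, ha])
          exact absurd hab (Finset.ne_of_mem_erase this)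
        · rw [Function.update_of_ne hna, Function.update_of_ne hnb] at hab
          exact hg.injOn (by simp [Finset.mem_erase, hna, ha]) (by simp [Finset.mem_erase, hnb, hb]) hab
    · intro y hy
      simp only [Finset.mem_coe] at hy
      by_cases hny : y = c₀
      · subst hny
        exact ⟨i₀, by simp [Finset.mem_coe, hi₀], Function.update_self _ _ _⟩
      · obtain ⟨a, ha, hay⟩ := hg.surjOn (by simp [Finset.mem_erase, hny, hy] : y ∈ ↑(C.erase c₀))
        simp only [Finset.mem_coe, Finset.mem_erase] at ha
        exact ⟨a, by simp [Finset.mem_coe, ha.2], by rw [Function.update_of_ne ha.1]; exact hay⟩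
    · intro a ha b hb hab
      simp only [Finset.mem_coe] at ha hb
      have key : ∀ x ∈ I, x ≠ i₀ → t x + Function.update g i₀ c₀ x < t i₀ + Function.update g i₀ c₀ i₀ := by
        intro x hx hnx
        rw [Function.update_self, Function.update_of_ne hnx]
        have h1 : g x ∈ C.erase c₀ := hg.mapsTo (by simp [Finset.mem_erase, hnx, hx])
        have h2 : g x < c₀ := lt_of_le_of_ne (C.le_max' _ (Finset.mem_of_mem_erase h1)) (Finset.ne_of_mem_erase h1)
        have h3 : t x ≤ t i₀ := hmax x hx
        linarith
      by_cases hna : a = i₀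
      · subst hna
        by_cases hnb : b = a
        · exact hnb.symm
        · exact absurd hab.symm (ne_of_lt (key b hb hnb))
      · by_cases hnb : b = i₀
        · subst hnb
          exact absurd hab (ne_of_lt (key a ha hna))
        · simp only [Function.update_of_ne hna, Function.update_of_ne hnb] at hab
          exact hginj (by simp [Finset.mem_erase, hna, ha]) (by simp [Finset.mem_erase, hnb, hb]) hab

end AuxStmt11


/-- Every connected graph with `m ≥ 3` edges in which every interior
vertex (degree at least two) is a support vertex is universal antimagic. -/
theorem stmt_11 {V : Type*} [Fintype V] (G : SimpleGraph V) (m : ℕ) (hm : 3 ≤ m)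
    (hcard : (edgeFS G).card = m) (hconn : G.Connected)
    (hsupp : ∀ v : V, 2 ≤ G.degree v → ∃ u : V, G.Adj v u ∧ G.degree u = 1) :
    UnivAntimagic G := by
  classical
  intro L hLpos hLcard
  have hVne : Nonempty V := hconn.nonempty
  have hm3 : 3 ≤ (edgeFS G).card := hcard ▸ hm
  have hm1 : 1 ≤ (edgeFS G).card := by omega
  -- basic data
  choose uu hadj hudeg using hsupp
  set d : V → Sym2 V := fun v => if h : 2 ≤ G.degree v then s(v, uu v h) else s(v, v) with hd
  set I : Finset V := Finset.univ.filter (fun v => 2 ≤ G.degree v) with hIdef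
  have hImem : ∀ v, v ∈ I ↔ 2 ≤ G.degree v := by
    intro v; simp [hIdef]
  have hdval : ∀ v (h : 2 ≤ G.degree v), d v = s(v, uu v h) := by
    intro v h; simp only [hd, dif_pos h]
  have hvd : ∀ v ∈ I, v ∈ d v := by
    intro v hv
    rw [hdval v ((hImem v).mp hv)]
    exact Sym2.mem_mk_left _ _
  have hdE : ∀ v ∈ I, d v ∈ edgeFS G := by
    intro v hv
    rw [hdval v ((hImem v).mp hv), mem_edgeFS', SimpleGraph.mem_edgeSet]
    exact hadj v _
  have huniq : ∀ v w, v ∈ I → w ∈ I → v ∈ d w → v = w := by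
    intro v w hv hw hmem
    have h2 := (hImem w).mp hw
    rw [hdval w h2] at hmem
    rcases Sym2.mem_iff.mp hmem with h | h
    · exact h
    · exfalso
      have := hudeg w h2
      have hv2 := (hImem v).mp hv
      rw [← h] at this
      omega
  have hdinj : Set.InjOn d ↑I := by
    intro v hv w hw hvw
    simp only [Finset.mem_coe] at hv hw
    have : v ∈ d w := hvw ▸ hvd v hv
    exact huniq v w hv hw this
  -- leaf and interior edges
  set LE : Finset (Sym2 V) := (edgeFS G).filter (fun e => ∃ v, v ∈ e ∧ G.degree v = 1) with hLEdef
  set IE : Finset (Sym2 V) := edgeFS G \ LE with hIEdef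
  have hLEsub : LE ⊆ edgeFS G := Finset.filter_subset _ _
  have hdLE : ∀ v ∈ I, d v ∈ LE := by
    intro v hv
    have h2 := (hImem v).mp hv
    rw [hLEdef, Finset.mem_filter]
    exact ⟨hdE v hv, uu v h2, by rw [hdval v h2]; exact Sym2.mem_mk_right _ _, hudeg v h2⟩
  set D : Finset (Sym2 V) := I.image d with hDdef
  have hDsub : D ⊆ LE := by
    intro e he
    obtain ⟨v, hv, rfl⟩ := Finset.mem_image.mp he
    exact hdLE v hv
  have hDcard : D.card = I.card := Finset.card_image_of_injOn hdinj
  -- unique interior vertex of a designated edge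
  set key : Sym2 V → V := fun e => if h : ∃ v, v ∈ I ∧ d v = e then h.choose else Classical.arbitrary V
    with hkeydef
  have hkey : ∀ v ∈ I, key (d v) = v := by
    intro v hv
    have hex : ∃ w, w ∈ I ∧ d w = d v := ⟨v, hv, rfl⟩
    simp only [hkeydef, dif_pos hex]
    obtain ⟨hw1, hw2⟩ := hex.choose_spec
    exact hdinj (Finset.mem_coe.mpr hw1) (Finset.mem_coe.mpr hv) hw2
  -- label split
  set p : ℕ := LE.card with hpdef
  have hpL : p ≤ L.card := by
    rw [hLcard, hpdef]; exact Finset.card_le_card hLEsub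
  obtain ⟨small, hsm_sub, hsm_card, hsm_lt⟩ := exists_bottom' L p hpL
  set big : Finset ℝ := L \ small with hbigdef
  have hbig_card : big.card = L.card - p := by
    rw [hbigdef, Finset.card_sdiff_of_subset hsm_sub, hsm_card]
  have hIE_card : IE.card = (edgeFS G).card - p := by
    rw [hIEdef, Finset.card_sdiff_of_subset hLEsub, hpdef]
  obtain ⟨ψ, hψ⟩ := exists_bijOn' LE small (by rw [hsm_card, hpdef])
  obtain ⟨χ, hχ⟩ := exists_bijOn' IE big (by rw [hbig_card, hIE_card, hLcard])
  set C : Finset ℝ := D.image ψ with hCdef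
  have hCsub : C ⊆ small := by
    intro c hc
    obtain ⟨e, he, rfl⟩ := Finset.mem_image.mp hc
    exact Finset.mem_coe.mp (hψ.mapsTo (Finset.mem_coe.mpr (hDsub he)))
  have hCcard : C.card = I.card := by
    rw [hCdef, Finset.card_image_of_injOn (hψ.injOn.mono (Finset.coe_subset.mpr hDsub)), hDcard]
  set φ₀ : Sym2 V → ℝ := fun e => if e ∈ IE then χ e else ψ e with hφ₀def
  set t : V → ℝ := fun v => ∑ e ∈ ((edgeFS G).filter (fun e => v ∈ e)).erase (d v), φ₀ e with htdef
  obtain ⟨g, hgbij, hginj⟩ := matching_lemma' I.card I t C rfl hCcard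
  set φ : Sym2 V → ℝ := fun e => if e ∈ D then g (key e) else φ₀ e with hφdef
  -- φ on the three pieces
  have hφ_onD : ∀ v ∈ I, φ (d v) = g v := by
    intro v hv
    have hdvD : d v ∈ D := Finset.mem_image_of_mem d hv
    simp only [hφdef, if_pos hdvD, hkey v hv]
  have hφ_onLE : ∀ e ∈ LE, e ∉ D → φ e = ψ e := by
    intro e he heD
    have heIE : e ∉ IE := by
      rw [hIEdef, Finset.mem_sdiff]
      exact fun h => h.2 he
    simp only [hφdef, if_neg heD, hφ₀def, if_neg heIE]
  have hφ_onIE : ∀ e ∈ IE, φ e = χ e := by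
    intro e he
    have heD : e ∉ D := by
      intro h
      exact (Finset.mem_sdiff.mp (hIEdef ▸ he)).2 (hDsub h)
    simp only [hφdef, if_neg heD, hφ₀def, if_pos he]
  have hDbij : Set.BijOn φ ↑D ↑C := by
    refine ⟨?_, ?_, ?_⟩
    · intro e he
      simp only [Finset.mem_coe] at he
      obtain ⟨v, hv, rfl⟩ := Finset.mem_image.mp he
      rw [hφ_onD v hv]
      exact hgbij.mapsTo (Finset.mem_coe.mpr hv)
    · intro a ha b hb hab
      simp only [Finset.mem_coe] at ha hb
      obtain ⟨v, hv, rfl⟩ := Finset.mem_image.mp ha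
      obtain ⟨w, hw, rfl⟩ := Finset.mem_image.mp hb
      rw [hφ_onD v hv, hφ_onD w hw] at hab
      rw [hgbij.injOn (Finset.mem_coe.mpr hv) (Finset.mem_coe.mpr hw) hab]
    · intro c hc
      obtain ⟨v, hv, hgv⟩ := hgbij.surjOn hc
      simp only [Finset.mem_coe] at hv
      exact ⟨d v, Finset.mem_coe.mpr (Finset.mem_image_of_mem d hv), by rw [hφ_onD v hv]; exact hgv⟩
  have hLDbij : Set.BijOn φ ↑(LE \ D) ↑(small \ C) := by
    refine ⟨?_, ?_, ?_⟩
    · intro e he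
      simp only [Finset.mem_coe, Finset.mem_sdiff] at he
      rw [hφ_onLE e he.1 he.2]
      simp only [Finset.mem_coe, Finset.mem_sdiff]
      refine ⟨Finset.mem_coe.mp (hψ.mapsTo (Finset.mem_coe.mpr he.1)), ?_⟩
      intro hmem
      obtain ⟨e', he', heq⟩ := Finset.mem_image.mp (hCdef ▸ hmem)
      exact he.2 (hψ.injOn (Finset.mem_coe.mpr (hDsub he')) (Finset.mem_coe.mpr he.1) heq ▸ he')
    · intro a ha b hb hab
      simp only [Finset.mem_coe, Finset.mem_sdiff] at ha hb
      rw [hφ_onLE a ha.1 ha.2, hφ_onLE b hb.1 hb.2] at hab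
      exact hψ.injOn (Finset.mem_coe.mpr ha.1) (Finset.mem_coe.mpr hb.1) hab
    · intro y hy
      simp only [Finset.mem_coe, Finset.mem_sdiff] at hy
      obtain ⟨e, he, heq⟩ := hψ.surjOn (Finset.mem_coe.mpr hy.1)
      simp only [Finset.mem_coe] at he
      have heD : e ∉ D := by
        intro h
        exact hy.2 (hCdef ▸ Finset.mem_image.mpr ⟨e, h, heq⟩)
      exact ⟨e, Finset.mem_coe.mpr (Finset.mem_sdiff.mpr ⟨he, heD⟩), by rw [hφ_onLE e he heD]; exact heq⟩
  have hIEbij : Set.BijOn φ ↑IE ↑big := by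
    refine Set.BijOn.congr hχ ?_
    intro e he
    exact (hφ_onIE e (Finset.mem_coe.mp he)).symm
  -- full bijection
  have hbij : Set.BijOn φ ↑(edgeFS G) ↑L := by
    have h1 := bijOn_union_of_disjoint' hDbij hLDbij
      (Finset.disjoint_coe.mpr (Finset.disjoint_sdiff))
    rw [← Finset.coe_union, ← Finset.coe_union, Finset.union_sdiff_of_subset hDsub,
      Finset.union_sdiff_of_subset hCsub] at h1
    have h2 := bijOn_union_of_disjoint' h1 hIEbij
      (Finset.disjoint_coe.mpr (Finset.disjoint_sdiff))
    rw [← Finset.coe_union, ← Finset.coe_union, hIEdef, hbigdef,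
      Finset.union_sdiff_of_subset hLEsub, Finset.union_sdiff_of_subset hsm_sub] at h2
    exact h2
  refine ⟨φ, hbij, ?_⟩
  -- value facts
  have hφsmall : ∀ e ∈ LE, φ e ∈ small := by
    intro e he
    by_cases hD : e ∈ D
    · exact hCsub (Finset.mem_coe.mp (hDbij.mapsTo (Finset.mem_coe.mpr hD)))
    · have := hLDbij.mapsTo (Finset.mem_coe.mpr (Finset.mem_sdiff.mpr ⟨he, hD⟩))
      exact (Finset.mem_sdiff.mp (Finset.mem_coe.mp this)).1
  have hφbig : ∀ e ∈ IE, φ e ∈ big :=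
    fun e he => Finset.mem_coe.mp (hIEbij.mapsTo (Finset.mem_coe.mpr he))
  have hφpos : ∀ e ∈ edgeFS G, 0 < φ e :=
    fun e he => hLpos _ (Finset.mem_coe.mp (hbij.mapsTo (Finset.mem_coe.mpr he)))
  have pair_le : ∀ (s : Finset (Sym2 V)), s ⊆ edgeFS G → ∀ e₁ ∈ s, ∀ e₂ ∈ s, e₁ ≠ e₂ →
      φ e₁ + φ e₂ ≤ ∑ e ∈ s, φ e := by
    intro s hs e₁ h1 e₂ h2 hne
    have hsub : ({e₁, e₂} : Finset (Sym2 V)) ⊆ s := by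
      intro x hx
      rcases Finset.mem_insert.mp hx with rfl | hx
      · exact h1
      · rw [Finset.mem_singleton.mp hx]; exact h2
    calc φ e₁ + φ e₂ = ∑ e ∈ ({e₁, e₂} : Finset (Sym2 V)), φ e := (Finset.sum_pair hne).symm
      _ ≤ ∑ e ∈ s, φ e :=
        Finset.sum_le_sum_of_subset_of_nonneg hsub (fun e heS _ => (hφpos e (hs heS)).le)
  -- interior vertices beat all small labels
  have hbeat : ∀ w, 2 ≤ G.degree w → ∀ x ∈ small, x < vSum G φ w := by
    intro w hw x hx
    have hwI : w ∈ I := (hImem w).mpr hw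
    have hvsum : vSum G φ w = ∑ e ∈ (edgeFS G).filter (fun e => w ∈ e), φ e := rfl
    have hdw_inc : d w ∈ (edgeFS G).filter (fun e => w ∈ e) :=
      Finset.mem_filter.mpr ⟨hdE w hwI, hvd w hwI⟩
    by_cases hcase : ∃ e' ∈ (edgeFS G).filter (fun e => w ∈ e), e' ∈ IE
    · obtain ⟨e', he'inc, he'IE⟩ := hcase
      have hne : e' ≠ d w := by
        intro h
        have h1 := (Finset.mem_sdiff.mp (hIEdef ▸ he'IE)).2
        exact h1 (h ▸ hdLE w hwI)
      have hsum := pair_le _ (Finset.filter_subset _ _) e' he'inc (d w) hdw_inc hne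
      have hx1 : x < φ e' := by
        have hb := hφbig e' he'IE
        rw [hbigdef, Finset.mem_sdiff] at hb
        exact hsm_lt x hx (φ e') hb.1 hb.2
      have hx2 : 0 < φ (d w) := hφpos _ (hdE w hwI)
      rw [hvsum]
      linarith
    · push_neg at hcase
      have hleaf : ∀ y, G.Adj w y → G.degree y = 1 := by
        intro y hy
        have hmemE : s(w, y) ∈ edgeFS G := (mem_edgeFS' G _).mpr ((G.mem_edgeSet).mpr hy)
        have hmem : s(w, y) ∈ (edgeFS G).filter (fun e => w ∈ e) :=
          Finset.mem_filter.mpr ⟨hmemE, Sym2.mem_mk_left _ _⟩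
        have hnIE : s(w, y) ∉ IE := hcase _ hmem
        have hLEmem : s(w, y) ∈ LE := by
          by_contra hc
          exact hnIE (hIEdef ▸ Finset.mem_sdiff.mpr ⟨hmemE, hc⟩)
        obtain ⟨z, hz, hz1⟩ := (Finset.mem_filter.mp hLEmem).2
        rcases Sym2.mem_iff.mp hz with rfl | rfl
        · omega
        · exact hz1
      have hall := star_all_inc' G hconn hw hleaf
      have hinc_all : (edgeFS G).filter (fun e => w ∈ e) = edgeFS G :=
        Finset.filter_true_of_mem (fun e he => hall e he)
      obtain ⟨e₀, he₀E, he₀⟩ := hbij.surjOn (Finset.mem_coe.mpr (hsm_sub hx))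
      simp only [Finset.mem_coe] at he₀E
      obtain ⟨e₁, he₁E, he₁ne⟩ := Finset.exists_mem_ne (s := edgeFS G) (by omega) e₀
      have hsum := pair_le (edgeFS G) subset_rfl e₁ he₁E e₀ he₀E he₁ne
      have hx2 : 0 < φ e₁ := hφpos _ he₁E
      rw [hvsum, hinc_all]
      rw [← he₀] at hx ⊢
      linarith
  -- decomposition of interior sums
  have hdecomp : ∀ v ∈ I, vSum G φ v = t v + g v := by
    intro v hv
    have hdv_inc : d v ∈ (edgeFS G).filter (fun e => v ∈ e) :=
      Finset.mem_filter.mpr ⟨hdE v hv, hvd v hv⟩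
    have hsplit : vSum G φ v
        = φ (d v) + ∑ e ∈ ((edgeFS G).filter (fun e => v ∈ e)).erase (d v), φ e :=
      (Finset.add_sum_erase _ φ hdv_inc).symm
    have hrest : ∑ e ∈ ((edgeFS G).filter (fun e => v ∈ e)).erase (d v), φ e = t v := by
      rw [htdef]
      apply Finset.sum_congr rfl
      intro e he
      have heD : e ∉ D := by
        intro hD
        obtain ⟨w, hwI, hwe⟩ := Finset.mem_image.mp hD
        have hve : v ∈ e := (Finset.mem_filter.mp (Finset.mem_of_mem_erase he)).2
        have hvw : v = w := huniq v w hv hwI (by rw [← hwe] at hve; exact hve)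
        exact (Finset.ne_of_mem_erase he) (by rw [← hwe, ← hvw])
      simp only [hφdef, if_neg heD]
    rw [hsplit, hφ_onD v hv, hrest]
    ring
  -- leaf sums
  have hleafsum : ∀ v, G.degree v = 1 → ∃ e, e ∈ LE ∧ v ∈ e ∧ vSum G φ v = φ e := by
    intro v hv1
    have hcard1 : ((edgeFS G).filter (fun e => v ∈ e)).card = 1 := by
      rw [inc_card']; exact hv1
    obtain ⟨e, he⟩ := Finset.card_eq_one.mp hcard1
    have heMem : e ∈ (edgeFS G).filter (fun e => v ∈ e) := he ▸ Finset.mem_singleton_self e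
    obtain ⟨heE, hve⟩ := Finset.mem_filter.mp heMem
    refine ⟨e, Finset.mem_filter.mpr ⟨heE, v, hve, hv1⟩, hve, ?_⟩
    have : vSum G φ v = ∑ e' ∈ (edgeFS G).filter (fun e => v ∈ e), φ e' := rfl
    rw [this, he, Finset.sum_singleton]
  -- injectivity
  intro v w h
  by_contra hne
  have hdv := deg_pos' G hconn hm1 v
  have hdw := deg_pos' G hconn hm1 w
  rcases eq_or_lt_of_le hdv with hv1 | hv2
  · rcases eq_or_lt_of_le hdw with hw1 | hw2
    · -- both leaves
      obtain ⟨ev, hevLE, hvev, hvs⟩ := hleafsum v hv1.symm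
      obtain ⟨ew, hewLE, hwew, hws⟩ := hleafsum w hw1.symm
      have heq : ev = ew := hbij.injOn (Finset.mem_coe.mpr (hLEsub hevLE))
        (Finset.mem_coe.mpr (hLEsub hewLE)) (by rw [← hvs, ← hws, h])
      subst heq
      have hevE : ev = s(v, w) := (Sym2.mem_and_mem_iff hne).mp ⟨hvev, hwew⟩
      obtain ⟨z, hz, hz2⟩ := interior_endpoint' G hconn hm3 ev (hLEsub hevLE)
      rw [hevE] at hz
      rcases Sym2.mem_iff.mp hz with rfl | rfl
      · omega
      · omega
    · -- v leaf, w interior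
      obtain ⟨ev, hevLE, hvev, hvs⟩ := hleafsum v hv1.symm
      have hsm : φ ev ∈ small := hφsmall ev hevLE
      have := hbeat w hw2 (φ ev) hsm
      rw [← h, hvs] at this
      exact lt_irrefl _ this
  · rcases eq_or_lt_of_le hdw with hw1 | hw2
    · -- w leaf, v interior
      obtain ⟨ew, hewLE, hwew, hws⟩ := hleafsum w hw1.symm
      have hsm : φ ew ∈ small := hφsmall ew hewLE
      have := hbeat v hv2 (φ ew) hsm
      rw [h, hws] at this
      exact lt_irrefl _ this
    · -- both interior
      have hvI : v ∈ I := (hImem v).mpr hv2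
      have hwI : w ∈ I := (hImem w).mpr hw2
      have : t v + g v = t w + g w := by
        rw [← hdecomp v hvI, ← hdecomp w hwI, h]
      exact hne (hginj (Finset.mem_coe.mpr hvI) (Finset.mem_coe.mpr hwI) this)
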